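/- Let L be a complex Banach Lie algebra, let J be a closed Lie ideal of L, and let I be a maximal proper closed Lie ideal of finite codimension in L. Then either J ⊆ I, or I ∩ J is a proper Lie ideal of J of finite codimension in J that is maximal among proper Lie ideals of J (and is closed). -/

import Mathlib

/-- If J is a closed Lie ideal and I a maximal proper closed Lie ideal of finite
codimension in a complex Banach Lie algebra L, then either J ⊆ I or I ∩ J is a closed
maximal proper Lie ideal of J of finite codimension in J. -/
theorem stmt_8 {L : Type*} [LieRing L] [LieAlgebra ℂ L] [MetricSpace L] [CompleteSpace L]
    (hdist : ∀ x y z : L, dist (x + z) (y + z) = dist x y)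
    (hnorm : ∀ (c : ℂ) (x : L), dist (c • x) 0 = ‖c‖ * dist x 0)
    (hbracket : Continuous fun p : L × L => ⁅p.1, p.2⁆)
    (J : LieIdeal ℂ L) (hJcl : IsClosed (J : Set L))
    (I : LieIdeal ℂ L) (hIp : I ≠ ⊤) (hIcl : IsClosed (I : Set L))
    (hIcod : FiniteDimensional ℂ (L ⧸ (I : Submodule ℂ L)))
    (hImax : ∀ I' : LieIdeal ℂ L, I < I' → I' = ⊤) :
    J ≤ I ∨
    (I ⊓ J < J ∧ IsClosed ((I ⊓ J : LieIdeal ℂ L) : Set L) ∧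
      (∀ x ∈ J, ∀ y ∈ I ⊓ J, ⁅x, y⁆ ∈ I ⊓ J) ∧
      FiniteDimensional ℂ (↥(J : Submodule ℂ L) ⧸
        ((I ⊓ J : LieIdeal ℂ L) : Submodule ℂ L).comap (J : Submodule ℂ L).subtype) ∧
      (∀ K : Submodule ℂ L, ((I ⊓ J : LieIdeal ℂ L) : Submodule ℂ L) ≤ K →
        K ≤ (J : Submodule ℂ L) → (∀ x ∈ J, ∀ y ∈ K, ⁅x, y⁆ ∈ K) →
        K ≠ (J : Submodule ℂ L) → K = ((I ⊓ J : LieIdeal ℂ L) : Submodule ℂ L))) := by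
  by_cases hJI : J ≤ I
  · exact Or.inl hJI
  right
  -- I ⊔ J = ⊤
  have hIltIJ : I < I ⊔ J := by
    refine lt_of_le_of_ne le_sup_left fun h => hJI ?_
    rw [h]; exact le_sup_right
  have htop : I ⊔ J = ⊤ := hImax _ hIltIJ
  have htopS : LieSubmodule.toSubmodule I ⊔ LieSubmodule.toSubmodule J = ⊤ := by
    rw [← LieSubmodule.sup_toSubmodule, htop]; rfl
  refine ⟨?_, ?_, ?_, ?_, ?_⟩
  · refine lt_of_le_of_ne inf_le_right fun h => hJI ?_
    rw [← h]; exact inf_le_left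
  · rw [LieSubmodule.coe_inf]; exact hIcl.inter hJcl
  · intro x hx y hy
    obtain ⟨hyI, hyJ⟩ := (LieSubmodule.mem_inf _ _ _).mp hy
    exact (LieSubmodule.mem_inf _ _ _).mpr ⟨I.lie_mem hyI, J.lie_mem hyJ⟩
  · -- finite codimension
    let f : (J : Submodule ℂ L) →ₗ[ℂ] L ⧸ (I : Submodule ℂ L) :=
      (I : Submodule ℂ L).mkQ.comp (J : Submodule ℂ L).subtype
    have hker : LinearMap.ker f =
        ((I ⊓ J : LieIdeal ℂ L) : Submodule ℂ L).comap (J : Submodule ℂ L).subtype := by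
      ext x
      simp only [f, LinearMap.mem_ker, LinearMap.comp_apply, Submodule.mkQ_apply,
        Submodule.Quotient.mk_eq_zero, Submodule.mem_comap, Submodule.subtype_apply,
        LieSubmodule.inf_toSubmodule, Submodule.mem_inf]
      exact ⟨fun h => ⟨h, x.2⟩, fun h => h.1⟩
    exact ((Submodule.quotEquivOfEq _ _ hker).symm.trans
      f.quotKerEquivRange).symm.finiteDimensional
  · -- maximality
    intro K hK1 hK2 hK3 hK4
    have hKJ : ∀ x ∈ K, x ∈ J := fun x hx => hK2 hx
    -- M := I ⊔ K as a Lie ideal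
    let M : LieIdeal ℂ L :=
      { toSubmodule := (I : Submodule ℂ L) ⊔ K
        lie_mem := by
          intro x m hm
          change m ∈ (I : Submodule ℂ L) ⊔ K at hm
          change ⁅x, m⁆ ∈ (I : Submodule ℂ L) ⊔ K
          obtain ⟨i, hi, k, hk, rfl⟩ := Submodule.mem_sup.mp hm
          have hx : x ∈ LieSubmodule.toSubmodule I ⊔ LieSubmodule.toSubmodule J := by
            rw [htopS]; trivial
          obtain ⟨a, ha, b, hb, rfl⟩ := Submodule.mem_sup.mp hx
          have h1 : ⁅a + b, i⁆ ∈ (I : Submodule ℂ L) := I.lie_mem hi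
          have h2 : ⁅a, k⁆ ∈ (I : Submodule ℂ L) := by
            rw [← lie_skew]
            exact neg_mem (I.lie_mem ha)
          have h3 : ⁅b, k⁆ ∈ K := hK3 b hb k hk
          have : ⁅a + b, i + k⁆ = (⁅a + b, i⁆ + ⁅a, k⁆) + ⁅b, k⁆ := by
            simp only [lie_add, add_lie]; abel
          rw [this]
          exact Submodule.mem_sup.mpr ⟨_, add_mem h1 h2, _, h3, rfl⟩ }
    have hIM : I ≤ M := by
      intro x hx
      exact Submodule.mem_sup.mpr ⟨x, hx, 0, zero_mem K, (add_zero x)⟩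
    have hMnetop : M ≠ ⊤ := by
      intro hMt
      apply hK4
      refine le_antisymm hK2 ?_
      intro x hx
      have hxM : x ∈ M := by rw [hMt]; trivial
      obtain ⟨i, hi, k, hk, hik⟩ := Submodule.mem_sup.mp hxM
      have hiJ : i ∈ (J : Submodule ℂ L) := by
        have : i = x - k := by rw [← hik, add_sub_cancel_right]
        rw [this]
        exact sub_mem hx (hK2 hk)
      have : i ∈ K := hK1 ((LieSubmodule.mem_inf _ _ _).mpr ⟨hi, hiJ⟩)
      rw [← hik]
      exact add_mem this hk
    have hMI : M = I := by
      by_contra h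
      exact hMnetop (hImax M (lt_of_le_of_ne hIM (Ne.symm h)))
    refine le_antisymm ?_ hK1
    intro x hx
    have hxM : x ∈ M := Submodule.mem_sup.mpr ⟨0, zero_mem _, x, hx, zero_add x⟩
    rw [hMI] at hxM
    exact (LieSubmodule.mem_inf _ _ _).mpr ⟨hxM, hK2 hx⟩
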